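/- Let k ≥ 1, let ι be a finite nonempty index set, let γ_i, η_i : Fin k → ℝ for i ∈ ι, and let A, B : Fin k → ℝ satisfy ⟨A,γ_i⟩ > 0 and ⟨B,γ_i⟩ > 0 for every i ∈ ι. Define λ(X) = max over i ∈ ι of ⟨X,η_i⟩/⟨X,γ_i⟩ and A_t = t•B + (1−t)•A. If there exists ε ∈ (0,1] such that λ(A_t) = λ(A) for all t ∈ [0,ε], then λ(A) ≤ λ(B). Equivalently, if λ(A) > λ(B) then λ is not locally constant near A along the segment from A to B. -/

import Mathlib

open Finset

/-- The displacement function on a simplex: the maximum over the (finitely many)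
candidates `i` of the stretching factors `⟨X,η i⟩/⟨X,γ i⟩`. -/
noncomputable def lamFun {k : ℕ} {ι : Type} [Fintype ι] [Nonempty ι]
    (γ η : ι → Fin k → ℝ) (X : Fin k → ℝ) : ℝ :=
  Finset.univ.sup' Finset.univ_nonempty
    (fun i => (∑ j, X j * η i j) / (∑ j, X j * γ i j))

/-- If the displacement function `λ` is constant equal to `λ(A)` on an initial
segment `[0,ε]` of the segment `A_t = t•B + (1-t)•A`, then `λ(A) ≤ λ(B)`.
Equivalently, if `λ(A) > λ(B)` then `λ` is not locally constant near `A`. -/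
theorem displacement_locally_constant_implies_le
    (k : ℕ) (hk : 1 ≤ k) (ι : Type) [Fintype ι] [Nonempty ι]
    (γ η : ι → Fin k → ℝ) (A B : Fin k → ℝ)
    (hA : ∀ i : ι, 0 < ∑ j, A j * γ i j)
    (hB : ∀ i : ι, 0 < ∑ j, B j * γ i j)
    (hconst : ∃ ε : ℝ, ε ∈ Set.Ioc (0:ℝ) 1 ∧
      ∀ t ∈ Set.Icc (0:ℝ) ε,
        lamFun γ η (fun j => t * B j + (1 - t) * A j) = lamFun γ η A) :
    lamFun γ η A ≤ lamFun γ η B := by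
  obtain ⟨ε, ⟨hε0, hε1⟩, hconst⟩ := hconst
  set L := lamFun γ η A with hL
  have hsum : ∀ (t : ℝ) (v : Fin k → ℝ), (∑ j, (t * B j + (1-t) * A j) * v j)
      = t * (∑ j, B j * v j) + (1-t) * (∑ j, A j * v j) := by
    intro t v
    rw [Finset.mul_sum, Finset.mul_sum, ← Finset.sum_add_distrib]
    exact Finset.sum_congr rfl (fun j _ => by ring)
  set c : ι → ℝ := fun i => (∑ j, A j * η i j) - L * (∑ j, A j * γ i j) with hc
  set d : ι → ℝ := fun i => ((∑ j, B j * η i j) - L * (∑ j, B j * γ i j)) - c i with hd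
  have key : ∀ t, 0 < t → t ≤ ε → ∃ i : ι, c i + t * d i = 0 := by
    intro t ht0 htε
    have ht1 : t ≤ 1 := htε.trans hε1
    have heq := hconst t ⟨le_of_lt ht0, htε⟩
    obtain ⟨i, -, hi⟩ := Finset.exists_mem_eq_sup' (Finset.univ_nonempty (α := ι))
      (fun i => (∑ j, (t * B j + (1-t) * A j) * η i j) / (∑ j, (t * B j + (1-t) * A j) * γ i j))
    have hpos : 0 < ∑ j, (t * B j + (1-t) * A j) * γ i j := by
      rw [hsum]
      have h1 := hA i; have h2 := hB i
      nlinarith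
    have hquot : (∑ j, (t*B j+(1-t)*A j) * η i j) / (∑ j, (t*B j+(1-t)*A j) * γ i j) = L := by
      rw [← heq]
      exact hi.symm
    have hnum : (∑ j, (t*B j+(1-t)*A j) * η i j) = L * (∑ j, (t*B j+(1-t)*A j) * γ i j) :=
      (div_eq_iff (ne_of_gt hpos)).mp hquot
    refine ⟨i, ?_⟩
    rw [hsum, hsum] at hnum
    simp only [hc, hd]
    ring_nf
    ring_nf at hnum
    linarith
  -- pigeonhole
  set N := Fintype.card ι with hN
  set ts : Fin (N+1) → ℝ := fun n => ε * (n+1) / (N+2) with hts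
  have hts_mem : ∀ n : Fin (N+1), 0 < ts n ∧ ts n ≤ ε := by
    intro n
    have h1 : (0:ℝ) < (n:ℝ) + 1 := by positivity
    have h2 : (0:ℝ) < (N:ℝ) + 2 := by positivity
    constructor
    · positivity
    · rw [div_le_iff₀ h2]
      have : (n:ℝ) ≤ N := by exact_mod_cast Nat.le_of_lt_succ n.isLt
      nlinarith
  have hts_inj : Function.Injective ts := by
    intro n m hnm
    have h2 : (0:ℝ) < (N:ℝ) + 2 := by positivity
    simp only [hts] at hnm
    field_simp at hnm
    exact Fin.ext (by exact_mod_cast (by linarith : ((n:ℕ):ℝ) = ((m:ℕ):ℝ)))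
  choose f hf using fun n : Fin (N+1) => key (ts n) (hts_mem n).1 (hts_mem n).2
  have hcard : Fintype.card ι < Fintype.card (Fin (N+1)) := by simp [hN]
  obtain ⟨n, m, hnm, hfnm⟩ := Fintype.exists_ne_map_eq_of_card_lt f hcard
  set i := f n with hi
  have h1 := hf n
  have h2 := hf m
  rw [← hfnm] at h2
  have htne : ts n ≠ ts m := fun h => hnm (hts_inj h)
  have hdi : d i = 0 := by
    have : (ts n - ts m) * d i = 0 := by linarith
    rcases mul_eq_zero.mp this with h | h
    · exact absurd (by linarith : ts n = ts m) htne
    · exact h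
  have hci : c i = 0 := by
    rw [hdi, mul_zero, add_zero] at h1; exact h1
  have hBeq : (∑ j, B j * η i j) = L * (∑ j, B j * γ i j) := by
    have : ((∑ j, B j * η i j) - L * (∑ j, B j * γ i j)) - c i = 0 := hdi
    linarith [hci]
  have : L ≤ (∑ j, B j * η i j) / (∑ j, B j * γ i j) := by
    rw [hBeq, mul_div_assoc, div_self (ne_of_gt (hB i)), mul_one]
  refine this.trans ?_
  exact Finset.le_sup' (fun i => (∑ j, B j * η i j) / (∑ j, B j * γ i j)) (Finset.mem_univ i)
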